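/- Let λ + ρ be a dominant integral weight for sp(2n,ℂ) with singular set Σ = {α_k} for a short simple root α_k (k < n), i.e., the coordinates of λ+ρ are strictly decreasing and positive except that coordinates k and k+1 are equal. Then the singular Hasse diagram W^{p,Σ} (minimal length coset representatives of W_Σ-cosets contained in W^p) consists exactly of the LS words d_1⋯d_n of length n with d_k = 0 and d_{k+1} = 1. -/

import Mathlib

namespace Stmt7

/-- The action of the element of `W^p` with LS word `w` (on `n` coordinates, `true` = digit 1)
on a coordinate tuple `μ`: the coordinates at positions with digit 1 are deleted, the
remaining coordinates are kept in order, and the negatives of the deleted coordinates are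
appended at the end in reverse order. -/
def actWord {n : ℕ} (w : Fin n → Bool) (μ : Fin n → ℤ) : Fin n → ℤ := fun t =>
  if h : t.val < (Finset.univ.filter (fun i => w i = false)).card then
    μ ((Finset.univ.filter (fun i => w i = false)).orderEmbOfFin rfl ⟨t.val, h⟩)
  else
    -μ ((Finset.univ.filter (fun i => w i = true)).orderEmbOfFin rfl
        (Fin.rev ⟨t.val - (Finset.univ.filter (fun i => w i = false)).card, by
          have h1 := Finset.card_filter_add_card_filter_not
            (s := (Finset.univ : Finset (Fin n))) (p := fun i => w i = false)
          simp only [Bool.not_eq_false, Finset.card_univ, Fintype.card_fin] at h1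
          have h2 := t.isLt
          omega⟩))

/-- The length of the element of `W^p` with LS word `w`: the word with ones at the
1-indexed positions `i_1 < ⋯ < i_k` has length `(n+1)k - ∑ i_j = ∑ (n - (i_j - 1))`. -/
def lsLength {n : ℕ} (w : Fin n → Bool) : ℕ :=
  ∑ i ∈ Finset.univ.filter (fun i => w i = true), (n - i.val)

section Aux

variable {k0 n : ℕ}

private abbrev F0 (w : Fin n → Bool) : Finset (Fin n) :=
  Finset.univ.filter (fun i => w i = false)

private abbrev F1 (w : Fin n → Bool) : Finset (Fin n) :=
  Finset.univ.filter (fun i => w i = true)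

private lemma cards (w : Fin n → Bool) : (F0 w).card + (F1 w).card = n := by
  have h1 := Finset.card_filter_add_card_filter_not
    (s := (Finset.univ : Finset (Fin n))) (p := fun i => w i = false)
  simp only [Bool.not_eq_false, Finset.card_univ, Fintype.card_fin] at h1
  exact h1

private lemma mem_F0 {w : Fin n → Bool} {a : Fin n} (ha : a ∈ F0 w) : w a = false :=
  (Finset.mem_filter.mp ha).2

private lemma mem_F1 {w : Fin n → Bool} {a : Fin n} (ha : a ∈ F1 w) : w a = true :=
  (Finset.mem_filter.mp ha).2

private lemma sort_lt_sort {s : Finset (Fin n)} {i j : ℕ} (hi : i < s.card)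
    (hj : j < s.card) (hij : i < j) :
    (s.sort (· ≤ ·))[i]'(by rw [Finset.length_sort]; exact hi) <
      (s.sort (· ≤ ·))[j]'(by rw [Finset.length_sort]; exact hj) := by
  have := (s.orderEmbOfFin rfl).strictMono (show (⟨i, hi⟩ : Fin s.card) < ⟨j, hj⟩ from hij)
  simpa [Finset.orderEmbOfFin_apply] using this

private lemma sort_mem {s : Finset (Fin n)} {i : ℕ} (hi : i < s.card) :
    (s.sort (· ≤ ·))[i]'(by rw [Finset.length_sort]; exact hi) ∈ s := by
  have := Finset.orderEmbOfFin_mem s rfl ⟨i, hi⟩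
  simpa [Finset.orderEmbOfFin_apply] using this

private lemma actWord_pos' (w : Fin n → Bool) (μ : Fin n → ℤ) {t : Fin n}
    (h : t.val < (F0 w).card) :
    actWord w μ t = μ (((F0 w).sort (· ≤ ·))[t.val]'(by
      rw [Finset.length_sort]; exact h)) := by
  unfold actWord
  rw [dif_pos h, Finset.orderEmbOfFin_apply]
  rfl

private lemma actWord_neg' (w : Fin n → Bool) (μ : Fin n → ℤ) {t : Fin n}
    (h : ¬ t.val < (F0 w).card) {j : ℕ}
    (hj : j = (F1 w).card - (t.val - (F0 w).card + 1)) :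
    actWord w μ t = -μ (((F1 w).sort (· ≤ ·))[j]'(by
      rw [Finset.length_sort]
      have := cards w
      have := t.isLt
      omega)) := by
  unfold actWord
  rw [dif_neg h, Finset.orderEmbOfFin_apply]
  subst hj
  congr 1

private lemma actWord_pos_sign (w : Fin n → Bool) (μ : Fin n → ℤ)
    (hpos : ∀ i, 0 < μ i) {t : Fin n} (h : t.val < (F0 w).card) :
    0 < actWord w μ t := by
  rw [actWord_pos' w μ h]; exact hpos _

private lemma actWord_neg_sign (w : Fin n → Bool) (μ : Fin n → ℤ)
    (hpos : ∀ i, 0 < μ i) {t : Fin n} (h : ¬ t.val < (F0 w).card) :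
    actWord w μ t < 0 := by
  rw [actWord_neg' w μ h rfl]
  exact neg_neg_of_pos (hpos _)

private lemma pair_of_eq (μ : Fin n → ℤ)
    (hsing : ∀ i j : Fin n, i < j → μ i = μ j → (i.val = k0 ∧ j.val = k0 + 1))
    {a b : Fin n} (hab : μ a = μ b) :
    a = b ∨ (a.val = k0 ∧ b.val = k0 + 1) ∨ (a.val = k0 + 1 ∧ b.val = k0) := by
  rcases lt_trichotomy a b with h | h | h
  · have := hsing a b h hab; tauto
  · left; exact h
  · have := hsing b a h hab.symm; tauto

private lemma strictAnti_of_ne (hk : k0 + 2 ≤ n) (μ : Fin n → ℤ)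
    (hpos : ∀ i, 0 < μ i)
    (hanti : ∀ i j : Fin n, i < j → μ j ≤ μ i)
    (hsing : ∀ i j : Fin n, i < j → μ i = μ j → (i.val = k0 ∧ j.val = k0 + 1))
    (w : Fin n → Bool)
    (hne : w ⟨k0, by omega⟩ ≠ w ⟨k0 + 1, by omega⟩) :
    StrictAnti (actWord w μ) := by
  intro s t hst
  have hcards := cards w
  have hstv : s.val < t.val := hst
  by_cases ht : t.val < (F0 w).card
  · have hs : s.val < (F0 w).card := by omega
    rw [actWord_pos' w μ hs, actWord_pos' w μ ht]
    have hab := sort_lt_sort hs ht hstv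
    have hle := hanti _ _ hab
    rcases hle.lt_or_eq with h | h
    · exact h
    · exfalso
      obtain ⟨h1, h2⟩ := hsing _ _ hab h.symm
      have m1 := mem_F0 (sort_mem hs)
      have m2 := mem_F0 (sort_mem ht)
      have e1 : ((F0 w).sort (· ≤ ·))[s.val]'(by rw [Finset.length_sort]; exact hs)
          = ⟨k0, by omega⟩ := Fin.ext h1
      have e2 : ((F0 w).sort (· ≤ ·))[t.val]'(by rw [Finset.length_sort]; exact ht)
          = ⟨k0 + 1, by omega⟩ := Fin.ext h2
      rw [e1] at m1; rw [e2] at m2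
      rw [m1, m2] at hne
      exact hne rfl
  · by_cases hs : s.val < (F0 w).card
    · rw [actWord_pos' w μ hs, actWord_neg' w μ ht rfl]
      have h1 := hpos (((F0 w).sort (· ≤ ·))[s.val]'(by rw [Finset.length_sort]; exact hs))
      have h2 := hpos (((F1 w).sort (· ≤ ·))[(F1 w).card - (t.val - (F0 w).card + 1)]'(by
        rw [Finset.length_sort]; have := t.isLt; omega))
      omega
    · rw [actWord_neg' w μ hs rfl, actWord_neg' w μ ht rfl]
      have hts : (F1 w).card - (t.val - (F0 w).card + 1)
          < (F1 w).card - (s.val - (F0 w).card + 1) := by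
        have := t.isLt; omega
      have hjt : (F1 w).card - (t.val - (F0 w).card + 1) < (F1 w).card := by
        have := t.isLt; omega
      have hjs : (F1 w).card - (s.val - (F0 w).card + 1) < (F1 w).card := by
        have := t.isLt; omega
      have hab := sort_lt_sort hjt hjs hts
      have hle := hanti _ _ hab
      rcases hle.lt_or_eq with h | h
      · omega
      · exfalso
        obtain ⟨h1, h2⟩ := hsing _ _ hab h.symm
        have m1 := mem_F1 (sort_mem hjt)
        have m2 := mem_F1 (sort_mem hjs)
        have e1 : ((F1 w).sort (· ≤ ·))[(F1 w).card - (t.val - (F0 w).card + 1)]'(by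
            rw [Finset.length_sort]; exact hjt) = ⟨k0, by omega⟩ := Fin.ext h1
        have e2 : ((F1 w).sort (· ≤ ·))[(F1 w).card - (s.val - (F0 w).card + 1)]'(by
            rw [Finset.length_sort]; exact hjs) = ⟨k0 + 1, by omega⟩ := Fin.ext h2
        rw [e1] at m1; rw [e2] at m2
        rw [m1, m2] at hne
        exact hne rfl

private lemma exists_sort_idx {s : Finset (Fin n)} {a : Fin n} (ha : a ∈ s) :
    ∃ i : ℕ, ∃ hi : i < s.card,
      (s.sort (· ≤ ·))[i]'(by rw [Finset.length_sort]; exact hi) = a := by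
  have hmem : a ∈ Set.range (s.orderEmbOfFin rfl) := by
    rw [Finset.range_orderEmbOfFin]; exact_mod_cast ha
  obtain ⟨i, hi⟩ := hmem
  exact ⟨i.val, i.isLt, by rw [← hi, Finset.orderEmbOfFin_apply]; rfl⟩

private lemma sort_idx_lt {s : Finset (Fin n)} {i j : ℕ} (hi : i < s.card) (hj : j < s.card)
    (h : (s.sort (· ≤ ·))[i]'(by rw [Finset.length_sort]; exact hi) <
      (s.sort (· ≤ ·))[j]'(by rw [Finset.length_sort]; exact hj)) : i < j := by
  by_contra hle
  push_neg at hle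
  rcases eq_or_lt_of_le hle with h' | h'
  · subst h'
    exact lt_irrefl _ h
  · exact absurd (sort_lt_sort hj hi h') (lt_asymm h)

set_option maxHeartbeats 1600000 in
private lemma ne_of_strictAnti (hk : k0 + 2 ≤ n) (μ : Fin n → ℤ)
    (heq : μ ⟨k0, by omega⟩ = μ ⟨k0 + 1, by omega⟩)
    (w : Fin n → Bool) (hSA : StrictAnti (actWord w μ)) :
    w ⟨k0, by omega⟩ ≠ w ⟨k0 + 1, by omega⟩ := by
  intro hcon
  have hcards := cards w
  cases hb : w ⟨k0, by omega⟩ with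
  | false =>
    have hb' : w ⟨k0 + 1, by omega⟩ = false := by rw [← hcon, hb]
    have mA : (⟨k0, by omega⟩ : Fin n) ∈ F0 w :=
      Finset.mem_filter.mpr ⟨Finset.mem_univ _, hb⟩
    have mB : (⟨k0 + 1, by omega⟩ : Fin n) ∈ F0 w :=
      Finset.mem_filter.mpr ⟨Finset.mem_univ _, hb'⟩
    obtain ⟨i, hi, hia⟩ := exists_sort_idx mA
    obtain ⟨j, hj, hjb⟩ := exists_sort_idx mB
    have hij : i < j := by
      apply sort_idx_lt hi hj
      rw [hia, hjb]
      exact Fin.mk_lt_mk.mpr (by omega)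
    have hin : i < n := by omega
    have hjn : j < n := by omega
    have hlt : (⟨i, hin⟩ : Fin n) < ⟨j, hjn⟩ := Fin.mk_lt_mk.mpr hij
    have v1 : actWord w μ ⟨i, hin⟩ = μ ⟨k0, by omega⟩ :=
      (actWord_pos' w μ (show ((⟨i, hin⟩ : Fin n)).val < (F0 w).card from hi)).trans
        (congrArg μ hia)
    have v2 : actWord w μ ⟨j, hjn⟩ = μ ⟨k0 + 1, by omega⟩ :=
      (actWord_pos' w μ (show ((⟨j, hjn⟩ : Fin n)).val < (F0 w).card from hj)).trans
        (congrArg μ hjb)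
    have hc := hSA hlt
    rw [v1, v2] at hc
    exact absurd hc (not_lt.mpr (le_of_eq heq))
  | true =>
    have hb' : w ⟨k0 + 1, by omega⟩ = true := by rw [← hcon, hb]
    have mA : (⟨k0, by omega⟩ : Fin n) ∈ F1 w :=
      Finset.mem_filter.mpr ⟨Finset.mem_univ _, hb⟩
    have mB : (⟨k0 + 1, by omega⟩ : Fin n) ∈ F1 w :=
      Finset.mem_filter.mpr ⟨Finset.mem_univ _, hb'⟩
    obtain ⟨i, hi, hia⟩ := exists_sort_idx mA
    obtain ⟨j, hj, hjb⟩ := exists_sort_idx mB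
    have hij : i < j := by
      apply sort_idx_lt hi hj
      rw [hia, hjb]
      exact Fin.mk_lt_mk.mpr (by omega)
    have htin : (F0 w).card + ((F1 w).card - 1 - i) < n := by omega
    have htjn : (F0 w).card + ((F1 w).card - 1 - j) < n := by omega
    have hlt : (⟨(F0 w).card + ((F1 w).card - 1 - j), htjn⟩ : Fin n) <
        ⟨(F0 w).card + ((F1 w).card - 1 - i), htin⟩ := Fin.mk_lt_mk.mpr (by omega)
    have v1 : actWord w μ ⟨(F0 w).card + ((F1 w).card - 1 - i), htin⟩ = -μ ⟨k0, by omega⟩ :=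
      (actWord_neg' w μ
        (show ¬ ((⟨(F0 w).card + ((F1 w).card - 1 - i), htin⟩ : Fin n)).val < (F0 w).card from
          (by omega : ¬ (F0 w).card + ((F1 w).card - 1 - i) < (F0 w).card))
        (j := i)
        (show i = (F1 w).card -
            (((⟨(F0 w).card + ((F1 w).card - 1 - i), htin⟩ : Fin n)).val - (F0 w).card + 1) from
          (by omega :
            i = (F1 w).card - ((F0 w).card + ((F1 w).card - 1 - i) - (F0 w).card + 1)))).trans
        (congrArg (fun z => -μ z) hia)
    have v2 : actWord w μ ⟨(F0 w).card + ((F1 w).card - 1 - j), htjn⟩ = -μ ⟨k0 + 1, by omega⟩ :=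
      (actWord_neg' w μ
        (show ¬ ((⟨(F0 w).card + ((F1 w).card - 1 - j), htjn⟩ : Fin n)).val < (F0 w).card from
          (by omega : ¬ (F0 w).card + ((F1 w).card - 1 - j) < (F0 w).card))
        (j := j)
        (show j = (F1 w).card -
            (((⟨(F0 w).card + ((F1 w).card - 1 - j), htjn⟩ : Fin n)).val - (F0 w).card + 1) from
          (by omega :
            j = (F1 w).card - ((F0 w).card + ((F1 w).card - 1 - j) - (F0 w).card + 1)))).trans
        (congrArg (fun z => -μ z) hjb)
    have hc := hSA hlt
    rw [v1, v2] at hc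
    exact absurd hc (not_lt.mpr (le_of_eq (congrArg (fun z => -z) heq.symm)))

/-- The word obtained by precomposing with the swap of positions `k0`, `k0+1`. -/
private def wsw (hk : k0 + 2 ≤ n) (w : Fin n → Bool) : Fin n → Bool := fun i =>
  w (Equiv.swap (⟨k0, by omega⟩ : Fin n) ⟨k0 + 1, by omega⟩ i)

private lemma swap_filter0 (hk : k0 + 2 ≤ n) (w : Fin n → Bool) :
    F0 (wsw hk w) =
      (F0 w).image (Equiv.swap (⟨k0, by omega⟩ : Fin n) ⟨k0 + 1, by omega⟩) := by
  ext i
  simp only [Finset.mem_filter, Finset.mem_univ, true_and, Finset.mem_image, wsw]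
  constructor
  · intro h
    exact ⟨_, h, Equiv.swap_apply_self _ _ _⟩
  · rintro ⟨a, ha, rfl⟩
    rwa [Equiv.swap_apply_self]

private lemma swap_filter1 (hk : k0 + 2 ≤ n) (w : Fin n → Bool) :
    F1 (wsw hk w) =
      (F1 w).image (Equiv.swap (⟨k0, by omega⟩ : Fin n) ⟨k0 + 1, by omega⟩) := by
  ext i
  simp only [Finset.mem_filter, Finset.mem_univ, true_and, Finset.mem_image, wsw]
  constructor
  · intro h
    exact ⟨_, h, Equiv.swap_apply_self _ _ _⟩
  · rintro ⟨a, ha, rfl⟩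
    rwa [Equiv.swap_apply_self]

private lemma swap_mono (hk : k0 + 2 ≤ n) (w : Fin n → Bool)
    (hne : w ⟨k0, by omega⟩ ≠ w ⟨k0 + 1, by omega⟩) (c : Bool) :
    StrictMono (fun i : Fin (Finset.univ.filter (fun i => w i = c)).card =>
      (Equiv.swap (⟨k0, by omega⟩ : Fin n) ⟨k0 + 1, by omega⟩)
        ((Finset.univ.filter (fun i => w i = c)).orderEmbOfFin rfl i)) := by
  intro i j hij
  have hab : (Finset.univ.filter (fun i => w i = c)).orderEmbOfFin rfl i <
      (Finset.univ.filter (fun i => w i = c)).orderEmbOfFin rfl j :=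
    ((Finset.univ.filter (fun i => w i = c)).orderEmbOfFin rfl).strictMono hij
  have hwa : w ((Finset.univ.filter (fun i => w i = c)).orderEmbOfFin rfl i) = c :=
    (Finset.mem_filter.mp (Finset.orderEmbOfFin_mem _ rfl i)).2
  have hwb : w ((Finset.univ.filter (fun i => w i = c)).orderEmbOfFin rfl j) = c :=
    (Finset.mem_filter.mp (Finset.orderEmbOfFin_mem _ rfl j)).2
  set a := (Finset.univ.filter (fun i => w i = c)).orderEmbOfFin rfl i with ha
  set b := (Finset.univ.filter (fun i => w i = c)).orderEmbOfFin rfl j with hb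
  show Equiv.swap (⟨k0, by omega⟩ : Fin n) ⟨k0 + 1, by omega⟩ a <
    Equiv.swap (⟨k0, by omega⟩ : Fin n) ⟨k0 + 1, by omega⟩ b
  have hv : a.val < b.val := Fin.lt_def.mp hab
  by_cases haA : a = ⟨k0, by omega⟩
  · have hbB : b ≠ ⟨k0 + 1, by omega⟩ := by
      intro hcon
      rw [haA] at hwa
      rw [hcon] at hwb
      exact hne (hwa.trans hwb.symm)
    have hbA : b ≠ ⟨k0, by omega⟩ := ne_of_gt (haA ▸ hab)
    rw [haA, Equiv.swap_apply_left, Equiv.swap_apply_of_ne_of_ne hbA hbB]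
    rw [Fin.lt_def]
    have haAv : a.val = k0 := congrArg Fin.val haA
    have h2 : b.val ≠ k0 + 1 := fun h => hbB (Fin.ext h)
    show k0 + 1 < b.val
    omega
  · by_cases haB : a = ⟨k0 + 1, by omega⟩
    · have hbA : b ≠ ⟨k0, by omega⟩ := by
        intro hcon
        have h1 : a.val = k0 + 1 := congrArg Fin.val haB
        have h2 : b.val = k0 := congrArg Fin.val hcon
        omega
      have hbB : b ≠ ⟨k0 + 1, by omega⟩ := ne_of_gt (haB ▸ hab)
      rw [haB, Equiv.swap_apply_right, Equiv.swap_apply_of_ne_of_ne hbA hbB]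
      rw [Fin.lt_def]
      have h1 : a.val = k0 + 1 := congrArg Fin.val haB
      show k0 < b.val
      omega
    · rw [Equiv.swap_apply_of_ne_of_ne haA haB]
      by_cases hbA : b = ⟨k0, by omega⟩
      · rw [hbA, Equiv.swap_apply_left]
        rw [Fin.lt_def]
        have h1 : b.val = k0 := congrArg Fin.val hbA
        show a.val < k0 + 1
        omega
      · by_cases hbB : b = ⟨k0 + 1, by omega⟩
        · rw [hbB, Equiv.swap_apply_right]
          rw [Fin.lt_def]
          have h1 : b.val = k0 + 1 := congrArg Fin.val hbB
          have h2 : a.val ≠ k0 := fun h => haA (Fin.ext h)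
          show a.val < k0
          omega
        · rw [Equiv.swap_apply_of_ne_of_ne hbA hbB]
          exact hab

private lemma mu_swap (hk : k0 + 2 ≤ n) (μ : Fin n → ℤ)
    (heq : μ ⟨k0, by omega⟩ = μ ⟨k0 + 1, by omega⟩) (x : Fin n) :
    μ (Equiv.swap (⟨k0, by omega⟩ : Fin n) ⟨k0 + 1, by omega⟩ x) = μ x := by
  by_cases h1 : x = ⟨k0, by omega⟩
  · rw [h1, Equiv.swap_apply_left]
    exact heq.symm
  · by_cases h2 : x = ⟨k0 + 1, by omega⟩
    · rw [h2, Equiv.swap_apply_right]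
      exact heq
    · rw [Equiv.swap_apply_of_ne_of_ne h1 h2]

set_option maxHeartbeats 1600000 in
private lemma actWord_swap (hk : k0 + 2 ≤ n) (μ : Fin n → ℤ)
    (heq : μ ⟨k0, by omega⟩ = μ ⟨k0 + 1, by omega⟩) (w : Fin n → Bool) :
    actWord (wsw hk w) μ = actWord w μ := by
  by_cases hne : w ⟨k0, by omega⟩ = w ⟨k0 + 1, by omega⟩
  · have hww : wsw hk w = w := by
      funext x
      show w (Equiv.swap (⟨k0, by omega⟩ : Fin n) ⟨k0 + 1, by omega⟩ x) = w x
      by_cases h1 : x = ⟨k0, by omega⟩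
      · rw [h1, Equiv.swap_apply_left, ← hne]
      · by_cases h2 : x = ⟨k0 + 1, by omega⟩
        · rw [h2, Equiv.swap_apply_right, hne]
        · rw [Equiv.swap_apply_of_ne_of_ne h1 h2]
    rw [hww]
  · have hc0 : (F0 (wsw hk w)).card = (F0 w).card := by
      rw [swap_filter0 hk w]
      exact Finset.card_image_of_injective _ (Equiv.injective _)
    have hc1 : (F1 (wsw hk w)).card = (F1 w).card := by
      rw [swap_filter1 hk w]
      exact Finset.card_image_of_injective _ (Equiv.injective _)
    have hemb0 : (fun i : Fin (F0 w).card =>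
        (Equiv.swap (⟨k0, by omega⟩ : Fin n) ⟨k0 + 1, by omega⟩)
          ((F0 w).orderEmbOfFin rfl i)) = (F0 (wsw hk w)).orderEmbOfFin hc0 := by
      apply Finset.orderEmbOfFin_unique hc0
      · intro x
        rw [swap_filter0 hk w]
        exact Finset.mem_image_of_mem _ (Finset.orderEmbOfFin_mem _ rfl x)
      · exact swap_mono hk w hne false
    have hemb1 : (fun i : Fin (F1 w).card =>
        (Equiv.swap (⟨k0, by omega⟩ : Fin n) ⟨k0 + 1, by omega⟩)
          ((F1 w).orderEmbOfFin rfl i)) = (F1 (wsw hk w)).orderEmbOfFin hc1 := by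
      apply Finset.orderEmbOfFin_unique hc1
      · intro x
        rw [swap_filter1 hk w]
        exact Finset.mem_image_of_mem _ (Finset.orderEmbOfFin_mem _ rfl x)
      · exact swap_mono hk w hne true
    funext t
    by_cases h : t.val < (F0 w).card
    · have h' : t.val < (F0 (wsw hk w)).card := by omega
      have e1 : ((F0 (wsw hk w)).sort (· ≤ ·))[t.val]'(by
          rw [Finset.length_sort]; exact h') =
          Equiv.swap (⟨k0, by omega⟩ : Fin n) ⟨k0 + 1, by omega⟩
            (((F0 w).sort (· ≤ ·))[t.val]'(by rw [Finset.length_sort]; exact h)) := by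
        have h2 := congrFun hemb0 ⟨t.val, h⟩
        simp only [Finset.orderEmbOfFin_apply] at h2
        exact h2.symm
      exact (actWord_pos' (wsw hk w) μ h').trans
        (((congrArg μ e1).trans (mu_swap hk μ heq _)).trans (actWord_pos' w μ h).symm)
    · have h' : ¬ t.val < (F0 (wsw hk w)).card := by omega
      have hcw := cards w
      have hjlt : (F1 w).card - (t.val - (F0 w).card + 1) < (F1 w).card := by
        have := t.isLt
        omega
      have e1 : ((F1 (wsw hk w)).sort (· ≤ ·))[(F1 w).card - (t.val - (F0 w).card + 1)]'(by
          rw [Finset.length_sort]; omega) =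
          Equiv.swap (⟨k0, by omega⟩ : Fin n) ⟨k0 + 1, by omega⟩
            (((F1 w).sort (· ≤ ·))[(F1 w).card - (t.val - (F0 w).card + 1)]'(by
              rw [Finset.length_sort]; exact hjlt)) := by
        have h2 := congrFun hemb1 ⟨(F1 w).card - (t.val - (F0 w).card + 1), hjlt⟩
        simp only [Finset.orderEmbOfFin_apply] at h2
        exact h2.symm
      exact (actWord_neg' (wsw hk w) μ h' (by rw [hc0, hc1])).trans
        (((congrArg (fun z => -μ z) e1).trans
            (congrArg Neg.neg (mu_swap hk μ heq _))).trans
          (actWord_neg' w μ h rfl).symm)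

private lemma not_img_of_card_lt (μ : Fin n → ℤ) (hpos : ∀ i, 0 < μ i)
    {w v : Fin n → Bool} (h : (F0 v).card < (F0 w).card) :
    actWord v μ ≠ actWord w μ := by
  intro himg
  have hcw := cards w
  set t : Fin n := (⟨(F0 v).card, by omega⟩ : Fin n) with ht
  have h1 : 0 < actWord w μ t :=
    actWord_pos_sign w μ hpos (show t.val < (F0 w).card from h)
  have h2 : actWord v μ t < 0 :=
    actWord_neg_sign v μ hpos (show ¬ t.val < (F0 v).card from lt_irrefl _)
  rw [himg] at h2
  omega

private lemma card0_eq (μ : Fin n → ℤ) (hpos : ∀ i, 0 < μ i) {w v : Fin n → Bool}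
    (himg : actWord v μ = actWord w μ) : (F0 v).card = (F0 w).card := by
  rcases lt_trichotomy (F0 v).card (F0 w).card with h | h | h
  · exact absurd himg (not_img_of_card_lt μ hpos h)
  · exact h
  · exact absurd himg.symm (not_img_of_card_lt μ hpos h)

/-- The value (as a natural number) of the `j`-th smallest position carrying digit 1. -/
private def entry1 (w : Fin n → Bool) (j : ℕ) : ℕ :=
  if h : j < (F1 w).card then
    ((((F1 w).sort (· ≤ ·))[j]'(by rw [Finset.length_sort]; exact h)).val)
  else 0

private lemma entry1_eq (w : Fin n → Bool) {j : ℕ} (hj : j < (F1 w).card) :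
    entry1 w j = (((F1 w).sort (· ≤ ·))[j]'(by rw [Finset.length_sort]; exact hj)).val :=
  dif_pos hj

private lemma lsLength_eq (w : Fin n → Bool) {c : ℕ} (hc : (F1 w).card = c) :
    lsLength w = ∑ j : Fin c, (n - entry1 w j.val) := by
  have himage : Finset.univ.filter (fun i => w i = true) =
      Finset.image (fun j : Fin c => (F1 w).orderEmbOfFin hc j) Finset.univ := by
    apply Finset.coe_injective
    rw [Finset.coe_image, Finset.coe_univ, Set.image_univ, Finset.range_orderEmbOfFin]
  unfold lsLength
  rw [himage, Finset.sum_image (fun a _ b _ h => ((F1 w).orderEmbOfFin hc).injective h)]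
  apply Finset.sum_congr rfl
  intro j _
  have hjc : j.val < (F1 w).card := by rw [hc]; exact j.isLt
  rw [entry1_eq w hjc]
  have happ := Finset.orderEmbOfFin_apply (F1 w) hc j
  rw [happ]
  rfl

set_option maxHeartbeats 1600000 in
private lemma lsLength_le (hk : k0 + 2 ≤ n) (μ : Fin n → ℤ) (hpos : ∀ i, 0 < μ i)
    (hsing : ∀ i j : Fin n, i < j → μ i = μ j → (i.val = k0 ∧ j.val = k0 + 1))
    {w v : Fin n → Bool} (h0 : w ⟨k0, by omega⟩ = false)
    (himg : actWord v μ = actWord w μ) : lsLength w ≤ lsLength v := by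
  have hc0 : (F0 v).card = (F0 w).card := card0_eq μ hpos himg
  have hcw := cards w
  have hcv := cards v
  have hc1 : (F1 v).card = (F1 w).card := by omega
  have key : ∀ (j : ℕ), j < (F1 w).card →
      (entry1 v j = entry1 w j ∨ (entry1 w j = k0 + 1 ∧ entry1 v j = k0)) := by
    intro j hj
    have hjv : j < (F1 v).card := by omega
    set t : Fin n := (⟨(F0 w).card + ((F1 w).card - 1 - j), by omega⟩ : Fin n) with ht
    have htw : ¬ t.val < (F0 w).card :=
      (by omega : ¬ (F0 w).card + ((F1 w).card - 1 - j) < (F0 w).card)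
    have htv : ¬ t.val < (F0 v).card := by
      rw [hc0]
      exact (by omega : ¬ (F0 w).card + ((F1 w).card - 1 - j) < (F0 w).card)
    have e1 := actWord_neg' w μ htw (j := j)
      ((by omega : j = (F1 w).card - ((F0 w).card + ((F1 w).card - 1 - j) - (F0 w).card + 1)) :
        j = (F1 w).card - (t.val - (F0 w).card + 1))
    have e2 := actWord_neg' v μ htv (j := j) (by
      rw [hc0, hc1]
      exact (by omega : j = (F1 w).card - ((F0 w).card + ((F1 w).card - 1 - j) - (F0 w).card + 1)))
    have hchain := (e2.symm.trans (congrFun himg t)).trans e1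
    have hμ := neg_inj.mp hchain
    rcases pair_of_eq μ hsing hμ with h | h | h
    · left
      rw [entry1_eq v hjv, entry1_eq w hj]
      exact congrArg Fin.val h
    · right
      constructor
      · rw [entry1_eq w hj]
        exact h.2
      · rw [entry1_eq v hjv]
        exact h.1
    · exfalso
      have hwt := mem_F1 (sort_mem hj)
      have heqk : (((F1 w).sort (· ≤ ·))[j]'(by rw [Finset.length_sort]; exact hj)) =
          (⟨k0, by omega⟩ : Fin n) := Fin.ext h.2
      rw [heqk, h0] at hwt
      exact Bool.false_ne_true hwt
  rw [lsLength_eq w rfl, lsLength_eq v hc1]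
  apply Finset.sum_le_sum
  intro j _
  rcases key j.val j.isLt with h | h <;> omega

private lemma lsLength_swap_lt (hk : k0 + 2 ≤ n) (w : Fin n → Bool)
    (h0 : w ⟨k0, by omega⟩ = true) (h1 : w ⟨k0 + 1, by omega⟩ = false) :
    lsLength (wsw hk w) < lsLength w := by
  unfold lsLength
  have hfil : Finset.univ.filter (fun i => wsw hk w i = true) =
      (F1 w).image (Equiv.swap (⟨k0, by omega⟩ : Fin n) ⟨k0 + 1, by omega⟩) :=
    swap_filter1 hk w
  rw [hfil, Finset.sum_image (fun a _ b _ h => (Equiv.swap _ _).injective h)]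
  apply Finset.sum_lt_sum
  · intro i hi
    by_cases hiA : i = ⟨k0, by omega⟩
    · rw [hiA, Equiv.swap_apply_left]
      show n - (k0 + 1) ≤ n - k0
      omega
    · by_cases hiB : i = ⟨k0 + 1, by omega⟩
      · exfalso
        have hmem := mem_F1 hi
        rw [hiB, h1] at hmem
        exact Bool.false_ne_true hmem
      · rw [Equiv.swap_apply_of_ne_of_ne hiA hiB]
  · refine ⟨⟨k0, by omega⟩, Finset.mem_filter.mpr ⟨Finset.mem_univ _, h0⟩, ?_⟩
    rw [Equiv.swap_apply_left]
    show n - (k0 + 1) < n - k0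
    omega

end Aux

/-- Singularity of the first kind: let `μ = λ + ρ` be dominant with exactly one pair of
equal coordinates, at the (0-indexed) positions `k0` and `k0 + 1` (so the singular simple
root is the short root `α_{k0+1}`), and all coordinates positive.  Then an LS word `w`
belongs to the singular Hasse diagram `W^{p,Σ}` — i.e. `w(μ)` is strictly `p`-dominant and
`w` has minimal length among the words with the same image `w(μ)` — if and only if its
digits at positions `k0, k0+1` are `0, 1`. -/
theorem singular_hasse_first_kind (n k0 : ℕ) (hk : k0 + 2 ≤ n) (μ : Fin n → ℤ)
    (hpos : ∀ i, 0 < μ i)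
    (hanti : ∀ i j : Fin n, i < j → μ j ≤ μ i)
    (heq : μ ⟨k0, by omega⟩ = μ ⟨k0 + 1, by omega⟩)
    (hsing : ∀ i j : Fin n, i < j → μ i = μ j → (i.val = k0 ∧ j.val = k0 + 1))
    (w : Fin n → Bool) :
    (StrictAnti (actWord w μ) ∧
        ∀ w' : Fin n → Bool, actWord w' μ = actWord w μ → lsLength w ≤ lsLength w') ↔
      (w ⟨k0, by omega⟩ = false ∧ w ⟨k0 + 1, by omega⟩ = true) := by
  constructor
  · rintro ⟨hSA, hmin⟩
    have hne := ne_of_strictAnti hk μ heq w hSA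
    by_cases hb : w ⟨k0, by omega⟩ = false
    · have hb2 : w ⟨k0 + 1, by omega⟩ = true := by
        by_cases h2 : w ⟨k0 + 1, by omega⟩ = true
        · exact h2
        · rw [Bool.not_eq_true] at h2
          exact absurd (hb.trans h2.symm) hne
      exact ⟨hb, hb2⟩
    · exfalso
      rw [Bool.not_eq_false] at hb
      have hb' : w ⟨k0 + 1, by omega⟩ = false := by
        by_cases h2 : w ⟨k0 + 1, by omega⟩ = false
        · exact h2
        · rw [Bool.not_eq_false] at h2
          exact absurd (hb.trans h2.symm) hne
      have hlt := lsLength_swap_lt hk w hb hb'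
      have hge := hmin (wsw hk w) (actWord_swap hk μ heq w)
      omega
  · rintro ⟨h0, h1⟩
    have hne : w ⟨k0, by omega⟩ ≠ w ⟨k0 + 1, by omega⟩ := by
      rw [h0, h1]
      exact Bool.false_ne_true
    exact ⟨strictAnti_of_ne hk μ hpos hanti hsing w hne,
      fun v himg => lsLength_le hk μ hpos hsing h0 himg⟩

end Stmt7
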